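/- Let β > 1 be a Pisot–Vijayaraghavan number of degree s with Galois conjugates β₁,…,β_{s−1} all of modulus strictly less than 1. Then for every polynomial A(X) with integer coefficients such that A(β) ≠ 0, one has |A(β)| ≥ M^{1−s} · ∏_{k=1}^{s−1}(1 − |β_k|), where M is the maximum of the absolute values of the coefficients of A. -/

import Mathlib

open Polynomial



lemma ringHom_aeval {R S : Type*} [CommRing R] [CommRing S] (f : R →+* S) (y : R)
    (A : Polynomial ℤ) : f (aeval y A) = aeval (f y) A :=
  (Polynomial.aeval_algHom_apply f.toIntAlgHom y A).symm

lemma abs_aeval_le (A : Polynomial ℤ) (M : ℕ) (hM : ∀ i, (A.coeff i).natAbs ≤ M) (z : ℂ)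
    (hz : ‖z‖ < 1) : ‖aeval z A‖ ≤ M / (1 - ‖z‖) := by
  set r := ‖z‖ with hr
  have h0 : (0:ℝ) ≤ r := norm_nonneg z
  have h1 : 0 < 1 - r := by linarith
  rw [aeval_eq_sum_range, div_eq_mul_inv]
  calc ‖∑ i ∈ Finset.range (A.natDegree + 1), A.coeff i • z ^ i‖
      ≤ ∑ i ∈ Finset.range (A.natDegree + 1), ‖A.coeff i • z ^ i‖ :=
        norm_sum_le _ _
    _ ≤ ∑ i ∈ Finset.range (A.natDegree + 1), (M : ℝ) * r ^ i := by
        refine Finset.sum_le_sum fun i _ => ?_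
        rw [zsmul_eq_mul, norm_mul, norm_pow, Complex.norm_intCast]
        have : |((A.coeff i : ℝ))| ≤ (M:ℝ) := by
          rw [← Int.cast_abs, Int.abs_eq_natAbs]; exact_mod_cast hM i
        exact mul_le_mul this le_rfl (pow_nonneg h0 i) (Nat.cast_nonneg M)
    _ = (M:ℝ) * ∑ i ∈ Finset.range (A.natDegree + 1), r ^ i := by
        rw [Finset.mul_sum]
    _ ≤ (M:ℝ) * (1 - r)⁻¹ := by
        gcongr
        calc ∑ i ∈ Finset.range (A.natDegree + 1), r ^ i
            ≤ ∑' i : ℕ, r ^ i :=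
              Summable.sum_le_tsum _ (fun i _ => pow_nonneg h0 i) (summable_geometric_of_lt_one h0 hz)
          _ = (1 - r)⁻¹ := tsum_geometric_of_lt_one h0 hz

lemma prod_embeddings_eq_roots {K : Type*} [Field K] [Algebra ℚ K]
    [Fintype (K →ₐ[ℚ] ℂ)] (pb : PowerBasis ℚ K) (g : ℂ → ℂ) :
    (∏ σ : K →ₐ[ℚ] ℂ, g (σ pb.gen)) = (((minpoly ℚ pb.gen).aroots ℂ).map g).prod := by
  classical
  have hnd : ((minpoly ℚ pb.gen).aroots ℂ).Nodup :=
    nodup_roots ((minpoly.irreducible pb.isIntegral_gen).separable.map (f := algebraMap ℚ ℂ))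
  rw [Fintype.prod_equiv (pb.liftEquiv' (B := ℂ)) _ (fun y => g y.1) (fun σ => by simp)]
  rw [Finset.prod_mem_multiset _ (fun y => g y.1) g (fun _ => rfl), Finset.prod_eq_multiset_prod,
    Multiset.toFinset_val, Multiset.dedup_eq_self.mpr hnd]


set_option maxHeartbeats 1000000 in
/-- Garsia's separation lemma: if `β` is a PV number of degree `s` with Galois
conjugates `conj k` all of modulus `< 1`, then for every integer polynomial `A`
with `A(β) ≠ 0` one has `|A(β)| ≥ M^(1-s) * ∏ (1 - |βₖ|)`, where `M` is the
maximum of the absolute values of the coefficients of `A`. -/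
theorem garsia_separation
    (β : ℝ) (hβ1 : 1 < β) (hint : IsIntegral ℤ β)
    (s : ℕ) (hs : 1 ≤ s) (hdeg : (minpoly ℤ β).natDegree = s)
    (conj : Fin (s - 1) → ℂ)
    (hconj : ∀ k, ‖conj k‖ < 1)
    (hroots : (minpoly ℤ β).aroots ℂ =
      (β : ℂ) ::ₘ Multiset.map conj (Finset.univ.val : Multiset (Fin (s - 1))))
    (A : Polynomial ℤ) (hA : Polynomial.aeval β A ≠ 0) :
    ((A.support.sup fun i => (A.coeff i).natAbs : ℕ) : ℝ) ^ ((1 : ℤ) - s) *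
        ∏ k, (1 - ‖conj k‖) ≤ |Polynomial.aeval β A| := by
  classical
  have hβalg : IsIntegral ℚ β := hint.tower_top
  set K := IntermediateField.adjoin ℚ ({β} : Set ℝ) with hK
  haveI : FiniteDimensional ℚ K := IntermediateField.adjoin.finiteDimensional hβalg
  set pb : PowerBasis ℚ K := IntermediateField.adjoin.powerBasis hβalg with hpb
  have hgen : algebraMap K ℝ pb.gen = β := by
    rw [hpb, IntermediateField.adjoin.powerBasis_gen]
    exact IntermediateField.AdjoinSimple.algebraMap_gen ℚ β
  have hminQ : minpoly ℚ pb.gen = (minpoly ℤ β).map (algebraMap ℤ ℚ) := by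
    have h1 : minpoly ℚ β = (minpoly ℤ β).map (algebraMap ℤ ℚ) :=
      minpoly.isIntegrallyClosed_eq_field_fractions ℚ ℝ hint
    rw [← h1, ← hgen, minpoly.algebraMap_eq (algebraMap K ℝ).injective]
  have haroots : (minpoly ℚ pb.gen).aroots ℂ = (minpoly ℤ β).aroots ℂ := by
    rw [hminQ, aroots_def, aroots_def, Polynomial.map_map, ← IsScalarTower.algebraMap_eq]
  -- the element x = A(gen)
  set x : K := aeval pb.gen A with hx
  have hxβ : algebraMap K ℝ x = aeval β A := by
    rw [hx, ringHom_aeval, hgen]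
  have hx0 : x ≠ 0 := by
    intro h
    apply hA; rw [← hxβ, h, map_zero]
  have hgx : IsIntegral ℤ pb.gen := by
    rw [← isIntegral_algebraMap_iff (algebraMap K ℝ).injective, hgen]; exact hint
  have hxint : IsIntegral ℤ x := by
    have hmem : x ∈ Algebra.adjoin ℤ ({pb.gen} : Set K) := aeval_mem_adjoin_singleton ℤ pb.gen
    have hle : Algebra.adjoin ℤ ({pb.gen} : Set K) ≤ integralClosure ℤ K :=
      Algebra.adjoin_le (Set.singleton_subset_iff.2 hgx)
    exact hle hmem
  -- the norm
  set n : ℚ := Algebra.norm ℚ x with hn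
  have hnint : IsIntegral ℤ n := Algebra.isIntegral_norm ℚ hxint
  obtain ⟨m, hm⟩ := IsIntegrallyClosed.isIntegral_iff.mp hnint
  have hn0 : n ≠ 0 := by
    rw [hn, Algebra.norm_ne_zero_iff]; exact hx0
  have h1n : (1:ℝ) ≤ |(n:ℝ)| := by
    have hm0 : m ≠ 0 := by rintro rfl; apply hn0; rw [← hm]; simp
    have h2 : (1:ℤ) ≤ |m| := Int.one_le_abs hm0
    rw [← hm, algebraMap_int_eq, eq_intCast]
    push_cast
    exact_mod_cast h2
  -- product formula
  have hprod : (algebraMap ℚ ℂ) n = (((minpoly ℤ β).aroots ℂ).map (fun y => aeval y A)).prod := by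
    rw [hn, Algebra.norm_eq_prod_embeddings ℚ ℂ x]
    have hσ : ∀ σ : K →ₐ[ℚ] ℂ, σ x = aeval (σ pb.gen) A := fun σ => by
      rw [hx]; exact ringHom_aeval σ.toRingHom pb.gen A
    calc (∏ σ : K →ₐ[ℚ] ℂ, σ x) = ∏ σ : K →ₐ[ℚ] ℂ, (fun y => aeval y A) (σ pb.gen) := by
          exact Finset.prod_congr rfl fun σ _ => hσ σ
      _ = (((minpoly ℚ pb.gen).aroots ℂ).map (fun y => aeval y A)).prod :=
          prod_embeddings_eq_roots pb (fun y => aeval y A)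
      _ = _ := by rw [haroots]
  -- split the product using hroots
  have habs : ‖(algebraMap ℚ ℂ) n‖
      = |aeval β A| * ∏ k, ‖aeval (conj k) A‖ := by
    rw [hprod, hroots, Multiset.map_cons, Multiset.prod_cons, norm_mul]
    congr 1
    · have h : ((β:ℂ)) = algebraMap ℝ ℂ β := rfl
      rw [h, ← ringHom_aeval (algebraMap ℝ ℂ) β A]
      exact (Complex.norm_real _).trans (Real.norm_eq_abs _)
    · rw [Multiset.map_map, ← Finset.prod_eq_multiset_prod, norm_prod]
      rfl
  have hnabs : ‖(algebraMap ℚ ℂ) n‖ = |(n:ℝ)| := by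
    have : ((algebraMap ℚ ℂ) n) = ((n:ℝ):ℂ) := by push_cast; rfl
    rw [this, Complex.norm_real, Real.norm_eq_abs]
  -- key inequality
  have hkey : (1:ℝ) ≤ |aeval β A| * ∏ k, ‖aeval (conj k) A‖ := by
    rw [← habs, hnabs]; exact h1n
  -- the coefficient bound M
  set M : ℕ := A.support.sup fun i => (A.coeff i).natAbs with hMdef
  have hA0 : A ≠ 0 := by rintro rfl; simp at hA
  have hM1 : 1 ≤ M := by
    obtain ⟨i, hi⟩ := Polynomial.support_nonempty.mpr hA0
    have : 1 ≤ (A.coeff i).natAbs := by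
      have := Polynomial.mem_support_iff.mp hi
      omega
    exact le_trans this (Finset.le_sup (f := fun i => (A.coeff i).natAbs) hi)
  have hMbound : ∀ i, (A.coeff i).natAbs ≤ M := by
    intro i
    by_cases hi : i ∈ A.support
    · exact Finset.le_sup (f := fun i => (A.coeff i).natAbs) hi
    · simp [Polynomial.notMem_support_iff.mp hi]
  have hMpos : (0:ℝ) < (M:ℝ) := by exact_mod_cast hM1
  -- bounds for each factor
  have hck : ∀ k, (0:ℝ) < 1 - ‖conj k‖ := fun k => by
    have := hconj k; linarith
  have hPk : ∀ k, (1 - ‖conj k‖) * ‖aeval (conj k) A‖ ≤ (M:ℝ) := by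
    intro k
    have := abs_aeval_le A M hMbound (conj k) (hconj k)
    calc (1 - ‖conj k‖) * ‖aeval (conj k) A‖
        ≤ (1 - ‖conj k‖) * ((M:ℝ) / (1 - ‖conj k‖)) := by
          exact mul_le_mul_of_nonneg_left this (hck k).le
      _ = (M:ℝ) := by rw [mul_comm, div_mul_cancel₀ _ (ne_of_gt (hck k))]
  -- abbreviations
  set B : ℝ := |aeval β A| with hB
  set C : ℝ := ∏ k, (1 - ‖conj k‖) with hC
  set Q : ℝ := ∏ k, ‖aeval (conj k) A‖ with hQ
  have hCpos : 0 < C := Finset.prod_pos fun k _ => hck k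
  have hBpos : 0 ≤ B := abs_nonneg _
  have hCQ : C * Q ≤ (M:ℝ) ^ (s - 1) := by
    have : C * Q = ∏ k, (1 - ‖conj k‖) * ‖aeval (conj k) A‖ := by
      rw [hC, hQ, ← Finset.prod_mul_distrib]
    rw [this]
    calc (∏ k, (1 - ‖conj k‖) * ‖aeval (conj k) A‖)
        ≤ ∏ _k : Fin (s-1), (M:ℝ) :=
          Finset.prod_le_prod (fun k _ => mul_nonneg (hck k).le (norm_nonneg _))
            (fun k _ => hPk k)
      _ = (M:ℝ) ^ (s - 1) := by
          rw [Finset.prod_const, Finset.card_univ, Fintype.card_fin]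
  have hMs : (0:ℝ) < (M:ℝ) ^ (s-1) := pow_pos hMpos _
  have hfin : C ≤ B * (M:ℝ) ^ (s-1) := by
    calc C = C * 1 := (mul_one C).symm
      _ ≤ C * (B * Q) := by exact mul_le_mul_of_nonneg_left hkey hCpos.le
      _ = B * (C * Q) := by ring
      _ ≤ B * (M:ℝ) ^ (s-1) := mul_le_mul_of_nonneg_left hCQ hBpos
  have hzpow : ((M:ℝ)) ^ ((1:ℤ) - s) = ((M:ℝ) ^ (s-1))⁻¹ := by
    have h : (1:ℤ) - s = -((s:ℤ) - 1) := by ring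
    rw [h, zpow_neg, ← zpow_natCast]
    congr 1
    congr 1
    omega
  rw [hzpow, inv_mul_le_iff₀ hMs]
  calc C ≤ B * (M:ℝ)^(s-1) := hfin
    _ = (M:ℝ)^(s-1) * B := mul_comm _ _
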